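/- If there exists a ternary square-free word of length n containing exactly k occurrences of a given fixed letter, then n ≤ 4k + 3 and 2k ≤ n + 3. (Thus, up to boundary terms, the frequency of any letter in a ternary square-free word lies between 1/4 and 1/2.) -/

import Mathlib

/-- A word `w` is square-free if whenever `w = x ++ y ++ y ++ z`,
then `y` is the empty word. -/
def SquareFree {α : Type*} (w : List α) : Prop :=
  ∀ x y z : List α, w = x ++ y ++ y ++ z → y = []

lemma sf_factor {α : Type*} {a m b : List α} (h : SquareFree (a ++ m ++ b)) :
    SquareFree m := by
  intro u y z huz
  exact h (a ++ u) y (z ++ b) (by simp [huz, List.append_assoc])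

lemma first_occ {α : Type*} [DecidableEq α] (x : α) :
    ∀ w : List α, x ∈ w → ∃ p s, w = p ++ x :: s ∧ x ∉ p
  | a :: t, h => by
    by_cases ha : a = x
    · exact ⟨[], t, by simp [ha], by simp⟩
    · have hx : x ∈ t := by
        rcases List.mem_cons.mp h with h' | h'
        · exact absurd h'.symm ha
        · exact h'
      obtain ⟨p, s, h1, h2⟩ := first_occ x t hx
      exact ⟨a :: p, s, by simp [h1], by simp [h2, Ne.symm ha]⟩

/-- A square-free ternary word avoiding `x` has length ≤ 3. -/
lemma avoid_len (x : Fin 3) (w : List (Fin 3)) (hsf : SquareFree w)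
    (hav : ∀ a ∈ w, a ≠ x) : w.length ≤ 3 := by
  by_contra hlen
  push_neg at hlen
  match w, hlen with
  | a :: b :: c :: d :: t, _ =>
    have ha := hav a (by simp)
    have hb := hav b (by simp)
    have hc := hav c (by simp)
    have hd := hav d (by simp)
    have key : ∀ a b c d x : Fin 3, a ≠ x → b ≠ x → c ≠ x → d ≠ x →
        a = b ∨ b = c ∨ c = d ∨ (a = c ∧ b = d) := by decide
    rcases key a b c d x ha hb hc hd with h1 | h1 | h1 | ⟨h1, h2⟩
    · have := hsf [] [a] (c :: d :: t) (by simp [h1])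
      simp at this
    · have := hsf [a] [b] (d :: t) (by simp [h1])
      simp at this
    · have := hsf [a, b] [c] t (by simp [h1])
      simp at this
    · have := hsf [] [a, b] t (by simp [h1, h2])
      simp at this

lemma lb (x : Fin 3) : ∀ w : List (Fin 3),
    (∀ u v, w ≠ u ++ x :: x :: v) → 2 * w.count x ≤ w.length + 1
  | [], _ => by simp
  | [a], _ => by by_cases ha : a = x <;> simp [List.count_cons, ha]
  | a :: b :: t, h => by
    by_cases ha : a = x
    · have hb : b ≠ x := by
        intro hbx
        exact h [] t (by simp [ha, hbx])
      have ht : ∀ u v, t ≠ u ++ x :: x :: v := by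
        intro u v hc
        exact h (a :: b :: u) v (by simp [hc])
      have := lb x t ht
      subst ha
      rw [List.count_cons_self, List.count_cons_of_ne hb]
      simp only [List.length_cons]
      omega
    · have ht : ∀ u v, (b :: t) ≠ u ++ x :: x :: v := by
        intro u v hc
        exact h (a :: u) v (by simp [hc])
      have := lb x (b :: t) ht
      rw [List.count_cons_of_ne ha]
      simp only [List.length_cons] at *
      omega

lemma ub (x : Fin 3) : ∀ n (w : List (Fin 3)), w.length ≤ n → SquareFree w →
    w.length ≤ 4 * w.count x + 3 := by
  intro n
  induction n with
  | zero => intro w hw _; omega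
  | succ n ih =>
    intro w hw hsf
    by_cases hx : x ∈ w
    · obtain ⟨p, s, hps, hp⟩ := first_occ x w hx
      have hpsf : SquareFree p := by
        have : w = [] ++ p ++ (x :: s) := by simpa using hps
        exact sf_factor (this ▸ hsf)
      have hplen : p.length ≤ 3 :=
        avoid_len x p hpsf (fun a haa hax => hp (hax ▸ haa))
      have hssf : SquareFree s := by
        have : w = (p ++ [x]) ++ s ++ [] := by simp [hps]
        exact sf_factor (this ▸ hsf)
      have hwl : w.length = p.length + 1 + s.length := by simp [hps]; omega
      have hsl : s.length ≤ n := by omega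
      have := ih s hsl hssf
      have hcnt : w.count x = p.count x + 1 + s.count x := by
        simp [hps, List.count_cons, List.count_append]
        omega
      omega
    · have hc : w.count x = 0 := List.count_eq_zero.mpr hx
      have := avoid_len x w hsf (fun a ha hax => hx (hax ▸ ha))
      omega

/-- If there is a ternary square-free word of length `n` with exactly `k`
occurrences of a given fixed letter `x`, then `n ≤ 4k + 3` and `2k ≤ n + 3`. -/
theorem ternary_squareFree_letter_count_bounds
    (x : Fin 3) (n k : ℕ)
    (h : ∃ w : List (Fin 3), SquareFree w ∧ w.length = n ∧ w.count x = k) :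
    n ≤ 4 * k + 3 ∧ 2 * k ≤ n + 3 := by
  obtain ⟨w, hsf, hlen, hcnt⟩ := h
  have h1 := ub x w.length w le_rfl hsf
  have hnoxx : ∀ u v, w ≠ u ++ x :: x :: v := by
    intro u v hc
    have := hsf u [x] v (by simp [hc])
    simp at this
  have h2 := lb x w hnoxx
  subst hlen hcnt
  omega
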